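/- Let P ∈ ℝ^{n×r}, Q ∈ ℝ^{ℓ×n}, R ∈ ℝ^{ℓ×r} satisfy im R ⊆ im Q and ker P ⊆ ker R (so that 𝒜 := { A ∈ ℝ^{n×n} : R = Q A P } is nonempty), and let B ∈ ℝ^{n×m}. Then rank [A − λI, B] = n for all A ∈ 𝒜 and all λ ∈ ℂ (i.e., by the Hautus test, (A,B) is controllable for all A ∈ 𝒜) if and only if ker Q ⊆ im B and rank [R − λQP, QB] = rank Q for all λ ∈ ℂ. Similarly, rank [A − λI, B] = n for all A ∈ 𝒜 and all λ ∈ ℂ with |λ| ≥ 1 (i.e., (A,B) is stabilizable for all A ∈ 𝒜) if and only if ker Q ⊆ im B and rank [R − λQP, QB] = rank Q for all λ ∈ ℂ with |λ| ≥ 1. -/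

import Mathlib

open Matrix

/-- Complexification of a real matrix. -/
noncomputable def cx {a b : ℕ} (M : Matrix (Fin a) (Fin b) ℝ) : Matrix (Fin a) (Fin b) ℂ :=
  M.map (algebraMap ℝ ℂ)

namespace HautusAux

open Module


noncomputable def cxv {k : ℕ} (v : Fin k → ℝ) : Fin k → ℂ := fun i => (v i : ℂ)
noncomputable def reV {k : ℕ} (v : Fin k → ℂ) : Fin k → ℝ := fun i => (v i).re
noncomputable def imV {k : ℕ} (v : Fin k → ℂ) : Fin k → ℝ := fun i => (v i).im

variable {a b c : ℕ}

lemma cx_apply (M : Matrix (Fin a) (Fin b) ℝ) (i j) : cx M i j = (M i j : ℂ) := rfl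

lemma cx_mul {a b c : ℕ} (M : Matrix (Fin a) (Fin b) ℝ) (N : Matrix (Fin b) (Fin c) ℝ) :
    cx (M * N) = cx M * cx N := Matrix.map_mul

lemma cx_one : cx (1 : Matrix (Fin a) (Fin a) ℝ) = 1 :=
  Matrix.map_one _ (map_zero _) (map_one _)

lemma cx_add (M N : Matrix (Fin a) (Fin b) ℝ) : cx (M + N) = cx M + cx N :=
  Matrix.map_add _ (map_add _) _ _

lemma cxv_eq_zero {v : Fin a → ℝ} : cxv v = 0 ↔ v = 0 := by
  constructor
  · intro h; funext i
    have := congrFun h i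
    simpa [cxv] using this
  · rintro rfl; funext i; simp [cxv]

lemma cxv_add (v w : Fin a → ℝ) : cxv (v + w) = cxv v + cxv w := by
  funext i; simp [cxv]

lemma cxv_smul (r : ℝ) (v : Fin a → ℝ) : cxv (r • v) = (r : ℂ) • cxv v := by
  funext i; simp [cxv]

lemma cxv_vecMul (v : Fin a → ℝ) (M : Matrix (Fin a) (Fin b) ℝ) :
    cxv (v ᵥ* M) = cxv v ᵥ* cx M := by
  funext j
  simp [cxv, vecMul, dotProduct, cx_apply]

lemma cxv_mulVec (M : Matrix (Fin a) (Fin b) ℝ) (v : Fin b → ℝ) :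
    cxv (M *ᵥ v) = cx M *ᵥ cxv v := by
  funext i
  simp [cxv, mulVec, dotProduct, cx_apply]

lemma reV_vecMul (z : Fin a → ℂ) (M : Matrix (Fin a) (Fin b) ℝ) :
    reV (z ᵥ* cx M) = reV z ᵥ* M := by
  funext j
  simp [reV, vecMul, dotProduct, cx_apply, Complex.re_sum, Complex.mul_re]

lemma imV_vecMul (z : Fin a → ℂ) (M : Matrix (Fin a) (Fin b) ℝ) :
    imV (z ᵥ* cx M) = imV z ᵥ* M := by
  funext j
  simp [imV, vecMul, dotProduct, cx_apply, Complex.im_sum, Complex.mul_im]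

lemma reV_mulVec (M : Matrix (Fin a) (Fin b) ℝ) (z : Fin b → ℂ) :
    reV (cx M *ᵥ z) = M *ᵥ reV z := by
  funext i
  simp [reV, mulVec, dotProduct, cx_apply, Complex.re_sum, Complex.mul_re]

lemma imV_mulVec (M : Matrix (Fin a) (Fin b) ℝ) (z : Fin b → ℂ) :
    imV (cx M *ᵥ z) = M *ᵥ imV z := by
  funext i
  simp [imV, mulVec, dotProduct, cx_apply, Complex.im_sum, Complex.mul_im]

lemma re_add_I_im (z : Fin a → ℂ) : z = cxv (reV z) + Complex.I • cxv (imV z) := by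
  funext i
  simp [cxv, reV, imV, Complex.ext_iff]



/-- separation: if `x` is not in the column space of `N`, there is a left-kernel vector of `N`
not orthogonal to `x`. -/
lemma exists_sep {K : Type*} [Field K] {a : ℕ} {c : Type*} [Fintype c]
    (N : Matrix (Fin a) c K) (x : Fin a → K) (hx : x ∉ LinearMap.range N.mulVecLin) :
    ∃ z : Fin a → K, z ᵥ* N = 0 ∧ z ⬝ᵥ x ≠ 0 := by
  obtain ⟨f, hfx, hf⟩ := Submodule.exists_dual_map_eq_bot_of_notMem hx inferInstance
  set z : Fin a → K := fun i => f (fun j => if i = j then 1 else 0) with hz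
  have hfeq : ∀ y : Fin a → K, f y = z ⬝ᵥ y := by
    intro y
    rw [LinearMap.pi_apply_eq_sum_univ f y]
    simp [dotProduct, mul_comm, hz]
  have hker : ∀ y ∈ LinearMap.range N.mulVecLin, f y = 0 := by
    intro y hy
    have : f y ∈ Submodule.map f (LinearMap.range N.mulVecLin) := ⟨y, hy, rfl⟩
    rw [hf] at this
    simpa using this
  refine ⟨z, ?_, ?_⟩
  · funext k
    have hcol : (fun i => N i k) ∈ LinearMap.range N.mulVecLin := by
      classical
      refine ⟨fun j => if j = k then 1 else 0, ?_⟩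
      funext i
      simp [mulVecLin_apply, mulVec, dotProduct]
    have := hker _ hcol
    rw [hfeq] at this
    simpa [vecMul, dotProduct] using this
  · rw [hfeq] at hfx
    exact hfx

/-- row-space duality: a vector orthogonal to the kernel of `Q` lies in the row space. -/
lemma exists_vecMul_of_dot_ker {K : Type*} [Field K] {a b : ℕ}
    (Q : Matrix (Fin a) (Fin b) K) (z : Fin b → K)
    (h : ∀ x, Q *ᵥ x = 0 → z ⬝ᵥ x = 0) : ∃ η, z = η ᵥ* Q := by
  by_contra hnot
  have hz : z ∉ LinearMap.range Qᵀ.mulVecLin := by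
    intro ⟨η, hη⟩
    exact hnot ⟨η, by rw [← hη]; simp [mulVecLin_apply, mulVec_transpose]⟩
  obtain ⟨w, hw1, hw2⟩ := exists_sep Qᵀ z hz
  have hQw : Q *ᵥ w = 0 := by rwa [vecMul_transpose] at hw1
  exact hw2 (by rw [dotProduct_comm]; exact h w hQw)

/-- full row rank iff trivial left kernel. -/
lemma rank_eq_card_iff_vecMul {K : Type*} [Field K] {n : ℕ} {k : Type*} [Fintype k]
    (T : Matrix (Fin n) k K) : T.rank = n ↔ ∀ z, z ᵥ* T = 0 → z = 0 := by
  have h1 : Tᵀ.rank = T.rank := rank_transpose T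
  have h2 : Tᵀ.rank + finrank K (LinearMap.ker Tᵀ.mulVecLin) = n := by
    have := LinearMap.finrank_range_add_finrank_ker Tᵀ.mulVecLin
    rwa [Module.finrank_fintype_fun_eq_card, Fintype.card_fin] at this
  have h3 : (∀ z, z ᵥ* T = 0 → z = 0) ↔ LinearMap.ker Tᵀ.mulVecLin = ⊥ := by
    rw [Matrix.ker_mulVecLin_eq_bot_iff]
    constructor
    · intro h v hv; exact h v (by rwa [mulVec_transpose] at hv)
    · intro h v hv; exact h v (by rwa [← mulVec_transpose] at hv)
  rw [h3, ← Submodule.finrank_eq_zero]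
  omega

/-- rank `G` equals rank `Q'` iff left kernels agree, given left-kernel inclusion. -/
lemma rank_eq_rank_iff_vecMul {K : Type*} [Field K] {l n : ℕ} {k : Type*} [Fintype k]
    (Q' : Matrix (Fin l) (Fin n) K) (G : Matrix (Fin l) k K)
    (hG : ∀ η, η ᵥ* Q' = 0 → η ᵥ* G = 0) :
    G.rank = Q'.rank ↔ ∀ η, η ᵥ* G = 0 → η ᵥ* Q' = 0 := by
  have hle : LinearMap.ker Q'ᵀ.mulVecLin ≤ LinearMap.ker Gᵀ.mulVecLin := by
    intro η hη
    simp only [LinearMap.mem_ker, mulVecLin_apply, mulVec_transpose] at *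
    exact hG η hη
  have h2 : Gᵀ.rank + finrank K (LinearMap.ker Gᵀ.mulVecLin) = l := by
    have := LinearMap.finrank_range_add_finrank_ker Gᵀ.mulVecLin
    rwa [Module.finrank_fintype_fun_eq_card, Fintype.card_fin] at this
  have h2' : Q'ᵀ.rank + finrank K (LinearMap.ker Q'ᵀ.mulVecLin) = l := by
    have := LinearMap.finrank_range_add_finrank_ker Q'ᵀ.mulVecLin
    rwa [Module.finrank_fintype_fun_eq_card, Fintype.card_fin] at this
  rw [← rank_transpose G, ← rank_transpose Q']
  have hmono := Submodule.finrank_mono hle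
  constructor
  · intro hrank η hη
    have hdim : finrank K (LinearMap.ker Gᵀ.mulVecLin)
        ≤ finrank K (LinearMap.ker Q'ᵀ.mulVecLin) := by omega
    have heq := Submodule.eq_of_le_of_finrank_le hle hdim
    have : η ∈ LinearMap.ker Gᵀ.mulVecLin := by
      simp only [LinearMap.mem_ker, mulVecLin_apply, mulVec_transpose]; exact hη
    rw [← heq] at this
    simpa only [LinearMap.mem_ker, mulVecLin_apply, mulVec_transpose] using this
  · intro h
    have hle' : LinearMap.ker Gᵀ.mulVecLin ≤ LinearMap.ker Q'ᵀ.mulVecLin := by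
      intro η hη
      simp only [LinearMap.mem_ker, mulVecLin_apply, mulVec_transpose] at *
      exact h η hη
    have := Submodule.finrank_mono hle'
    omega

/-- the coordinatewise inclusion `ℝⁿ → ℂⁿ` as an `ℝ`-linear map. -/
noncomputable def cxvL (a : ℕ) : (Fin a → ℝ) →ₗ[ℝ] (Fin a → ℂ) where
  toFun := cxv
  map_add' v w := by funext i; simp [cxv]
  map_smul' r v := by funext i; simp [cxv]

variable {a b : ℕ}

lemma cxv_injective : Function.Injective (cxv (k := a)) := by
  intro v w h
  funext i
  have := congrFun h i
  simpa [cxv] using this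

lemma linearIndependent_cxv {ι : Type*} (v : ι → (Fin a → ℝ)) (hv : LinearIndependent ℝ v) :
    LinearIndependent ℂ (fun i => cxv (v i)) := by
  rw [linearIndependent_iff'] at hv ⊢
  intro s g hg i hi
  have hcomp : ∀ j, ∑ i ∈ s, g i * ((v i j : ℝ) : ℂ) = 0 := by
    intro j
    have := congrFun hg j
    simpa [cxv, Finset.sum_apply] using this
  have hre : ∀ j, ∑ i ∈ s, (g i).re * v i j = 0 := by
    intro j
    have := congrArg Complex.re (hcomp j)
    simpa [Complex.re_sum, Complex.mul_re] using this
  have him : ∀ j, ∑ i ∈ s, (g i).im * v i j = 0 := by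
    intro j
    have := congrArg Complex.im (hcomp j)
    simpa [Complex.im_sum, Complex.mul_im] using this
  have h1 := hv s (fun i => (g i).re) (by funext j; simpa [Finset.sum_apply] using hre j) i hi
  have h2 := hv s (fun i => (g i).im) (by funext j; simpa [Finset.sum_apply] using him j) i hi
  exact Complex.ext h1 h2

lemma rank_cx (M : Matrix (Fin a) (Fin b) ℝ) : (cx M).rank = M.rank := by
  classical
  rw [rank_eq_finrank_span_cols, rank_eq_finrank_span_cols]
  rw [show (cx M).col = (cx M)ᵀ from rfl, show M.col = Mᵀ from rfl]
  set s : Set (Fin a → ℝ) := Set.range Mᵀ with hs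
  have hsfin : s.Finite := Set.finite_range _
  have hcols : Set.range (cx M)ᵀ = cxv '' s := by
    have : (cx M)ᵀ = fun j => cxv (Mᵀ j) := by
      funext j i; rfl
    rw [this, hs]
    ext y; simp only [Set.mem_range, Set.mem_image]; constructor
    · rintro ⟨j, rfl⟩; exact ⟨_, ⟨j, rfl⟩, rfl⟩
    · rintro ⟨_, ⟨j, rfl⟩, rfl⟩; exact ⟨j, rfl⟩
  rw [hcols]
  obtain ⟨t, hts, hspan, hli⟩ := exists_linearIndependent ℝ s
  have htfin : t.Finite := hsfin.subset hts
  haveI : Fintype t := htfin.fintype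
  haveI : Fintype (cxv '' t) := (htfin.image _).fintype
  -- real side
  have hreal : finrank ℝ (Submodule.span ℝ s) = t.toFinset.card := by
    rw [← hspan, finrank_span_set_eq_card hli]
  -- complex independence of the image of t
  have hliC : LinearIndependent ℂ ((↑) : (cxv '' t) → (Fin a → ℂ)) := by
    have h1 : LinearIndependent ℂ (fun x : t => cxv (x : Fin a → ℝ)) :=
      linearIndependent_cxv _ hli
    have : Set.range (fun x : t => cxv (x : Fin a → ℝ)) = cxv '' t := by
      rw [← Set.image_eq_range]
    exact (linearIndependent_equiv (Equiv.Set.imageOfInjOn cxv t (cxv_injective.injOn))).mp h1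
  rw [hreal]
  have hcard : (cxv '' t).toFinset.card = t.toFinset.card := by
    rw [Set.toFinset_card, Set.toFinset_card]
    exact Fintype.card_congr (Equiv.Set.imageOfInjOn cxv t (cxv_injective.injOn)).symm
  have himage : cxv '' s ⊆ (Submodule.span ℂ (cxv '' t) : Set (Fin a → ℂ)) := by
    rintro y ⟨x, hxs, rfl⟩
    have hx : x ∈ Submodule.span ℝ t := by
      rw [hspan]; exact Submodule.subset_span hxs
    have h1 : cxv x ∈ Submodule.map (cxvL a) (Submodule.span ℝ t) := ⟨x, hx, rfl⟩
    rw [Submodule.map_span] at h1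
    have h2 : (cxvL a) '' t = cxv '' t := rfl
    rw [h2] at h1
    exact Submodule.span_le_restrictScalars ℝ ℂ (cxv '' t) h1
  have hle1 : Submodule.span ℂ (cxv '' s) ≤ Submodule.span ℂ (cxv '' t) :=
    Submodule.span_le.2 himage
  have hle2 : Submodule.span ℂ (cxv '' t) ≤ Submodule.span ℂ (cxv '' s) :=
    Submodule.span_mono (Set.image_mono hts)
  have hup : finrank ℂ (Submodule.span ℂ (cxv '' s)) ≤ t.toFinset.card := by
    calc finrank ℂ (Submodule.span ℂ (cxv '' s))
        ≤ finrank ℂ (Submodule.span ℂ (cxv '' t)) := Submodule.finrank_mono hle1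
      _ ≤ (cxv '' t).toFinset.card := finrank_span_le_card _
      _ = t.toFinset.card := hcard
  have hdown : t.toFinset.card ≤ finrank ℂ (Submodule.span ℂ (cxv '' s)) := by
    calc t.toFinset.card = (cxv '' t).toFinset.card := hcard.symm
      _ = finrank ℂ (Submodule.span ℂ (cxv '' t)) := (finrank_span_set_eq_card hliC).symm
      _ ≤ finrank ℂ (Submodule.span ℂ (cxv '' s)) := Submodule.finrank_mono hle2
  omega



lemma exists_A0 {n r l : ℕ} (P : Matrix (Fin n) (Fin r) ℝ) (Q : Matrix (Fin l) (Fin n) ℝ)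
    (R : Matrix (Fin l) (Fin r) ℝ)
    (him : LinearMap.range R.mulVecLin ≤ LinearMap.range Q.mulVecLin)
    (hker : LinearMap.ker P.mulVecLin ≤ LinearMap.ker R.mulVecLin) :
    ∃ A : Matrix (Fin n) (Fin n) ℝ, R = Q * A * P := by
  classical
  set p := P.mulVecLin
  set q := Q.mulVecLin
  set rr := R.mulVecLin
  -- step 1: factor rr through p, with range inside range q
  obtain ⟨C, hC⟩ := Submodule.exists_isCompl (LinearMap.range p)
  set π := Submodule.linearProjOfIsCompl _ _ hC
  obtain ⟨h, hh⟩ := p.rangeRestrict.exists_rightInverse_of_surjective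
    (LinearMap.range_eq_top.2 p.surjective_rangeRestrict)
  set s : (Fin n → ℝ) →ₗ[ℝ] (Fin l → ℝ) := rr ∘ₗ h ∘ₗ π
  have hsp : s ∘ₗ p = rr := by
    refine LinearMap.ext fun u => ?_
    simp only [LinearMap.comp_apply, s]
    have h1 : π (p u) = ⟨p u, LinearMap.mem_range_self p u⟩ := by
      exact Submodule.linearProjOfIsCompl_apply_left hC ⟨p u, LinearMap.mem_range_self p u⟩
    rw [h1]
    have h2 : p (h ⟨p u, LinearMap.mem_range_self p u⟩) = p u := by
      have := congrFun (congrArg DFunLike.coe hh) ⟨p u, LinearMap.mem_range_self p u⟩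
      simp only [LinearMap.comp_apply, LinearMap.id_apply] at this
      exact congrArg Subtype.val this
    have h3 : h ⟨p u, LinearMap.mem_range_self p u⟩ - u ∈ LinearMap.ker p := by
      simp [LinearMap.mem_ker, map_sub, h2]
    have h4 := hker h3
    rw [LinearMap.mem_ker, map_sub, sub_eq_zero] at h4
    exact h4
  have hsr : ∀ x, s x ∈ LinearMap.range q := by
    intro x
    exact him (LinearMap.mem_range_self rr _)
  -- step 2: lift through q
  obtain ⟨aa, haa⟩ := Module.projective_lifting_property q.rangeRestrict
    (s.codRestrict (LinearMap.range q) hsr) q.surjective_rangeRestrict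
  have hqa : q ∘ₗ aa = s := by
    refine LinearMap.ext fun x => ?_
    have := congrFun (congrArg DFunLike.coe haa) x
    simp only [LinearMap.comp_apply] at this ⊢
    have h2 : q (aa x) = (q.rangeRestrict (aa x) : Fin l → ℝ) := rfl
    rw [h2, this]
    rfl
  refine ⟨LinearMap.toMatrix' aa, ?_⟩
  have hfin : (Q * LinearMap.toMatrix' aa * P).mulVecLin = R.mulVecLin := by
    rw [Matrix.mulVecLin_mul, Matrix.mulVecLin_mul]
    have : (LinearMap.toMatrix' aa).mulVecLin = aa := by
      rw [← Matrix.toLin'_apply', Matrix.toLin'_toMatrix']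
    rw [this]
    show (q ∘ₗ aa) ∘ₗ p = rr
    rw [hqa, hsp]
  have := congrArg LinearMap.toMatrix' hfin
  rw [← Matrix.toLin'_apply', ← Matrix.toLin'_apply', LinearMap.toMatrix'_toLin',
    LinearMap.toMatrix'_toLin'] at this
  exact this.symm

-- new small helpers
lemma cx_smul (r : ℝ) (M : Matrix (Fin a) (Fin b) ℝ) : cx (r • M) = (r : ℂ) • cx M := by
  ext i j; simp [cx]

lemma cxv_zero : cxv (0 : Fin a → ℝ) = 0 := by funext i; simp [cxv]

lemma vecMul_smul_mat {α : Type*} [CommRing α] {p q : ℕ} (c : α) (M : Matrix (Fin p) (Fin q) α)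
    (v : Fin p → α) : v ᵥ* (c • M) = c • (v ᵥ* M) := by
  funext j
  simp only [Matrix.vecMul, dotProduct, Matrix.smul_apply, Pi.smul_apply, smul_eq_mul,
    Finset.mul_sum]
  exact Finset.sum_congr rfl fun i _ => by ring

lemma vecMul_vecMulVec {α : Type*} [CommRing α] {p q : ℕ} (v x : Fin p → α) (w : Fin q → α) :
    v ᵥ* vecMulVec x w = (v ⬝ᵥ x) • w := by
  funext j
  simp only [Matrix.vecMul, dotProduct, vecMulVec_apply, Pi.smul_apply, smul_eq_mul,
    Finset.sum_mul]
  exact Finset.sum_congr rfl fun i _ => by ring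

lemma vecMulVec_mul {α : Type*} [CommRing α] {p q s : ℕ} (x : Fin p → α) (w : Fin q → α)
    (P : Matrix (Fin q) (Fin s) α) : vecMulVec x w * P = vecMulVec x (w ᵥ* P) := by
  ext i j
  simp only [Matrix.mul_apply, vecMulVec_apply, Matrix.vecMul, dotProduct, Finset.mul_sum]
  exact Finset.sum_congr rfl fun k _ => by ring

lemma mul_vecMulVec {α : Type*} [CommRing α] {p q s : ℕ} (Q : Matrix (Fin s) (Fin p) α)
    (x : Fin p → α) (w : Fin q → α) : Q * vecMulVec x w = vecMulVec (Q *ᵥ x) w := by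
  ext i j
  simp only [Matrix.mul_apply, vecMulVec_apply, Matrix.mulVec, dotProduct, Finset.sum_mul]
  exact Finset.sum_congr rfl fun k _ => by ring

lemma vecMulVec_zero_left {α : Type*} [CommRing α] {p q : ℕ} (w : Fin q → α) :
    vecMulVec (0 : Fin p → α) w = 0 := by
  ext i j; simp [vecMulVec_apply]

lemma vecMulVec_zero_right {α : Type*} [CommRing α] {p q : ℕ} (x : Fin p → α) :
    vecMulVec x (0 : Fin q → α) = 0 := by
  ext i j; simp [vecMulVec_apply]

lemma cx_vecMulVec {p q : ℕ} (x : Fin p → ℝ) (w : Fin q → ℝ) :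
    cx (vecMulVec x w) = vecMulVec (cxv x) (cxv w) := by
  ext i j; simp [cx, vecMulVec_apply, cxv]

lemma cxv_dot (u w : Fin a → ℝ) : cxv u ⬝ᵥ cxv w = ((u ⬝ᵥ w : ℝ) : ℂ) := by
  simp only [dotProduct, cxv]
  norm_cast

lemma main {n r l m : ℕ} (P : Matrix (Fin n) (Fin r) ℝ) (Q : Matrix (Fin l) (Fin n) ℝ)
    (R : Matrix (Fin l) (Fin r) ℝ) (B : Matrix (Fin n) (Fin m) ℝ)
    (A₀ : Matrix (Fin n) (Fin n) ℝ) (hA₀ : R = Q * A₀ * P)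
    (S : Set ℂ) (h2 : (2 : ℂ) ∈ S) :
    (∀ A : Matrix (Fin n) (Fin n) ℝ, R = Q * A * P → ∀ lam ∈ S,
        (fromCols (cx A - lam • 1) (cx B)).rank = n) ↔
      (LinearMap.ker Q.mulVecLin ≤ LinearMap.range B.mulVecLin ∧
        ∀ lam ∈ S, (fromCols (cx R - lam • (cx Q * cx P)) (cx Q * cx B)).rank = Q.rank) := by
  classical
  -- Hautus rank condition in left-kernel form
  have hHaut : ∀ (A : Matrix (Fin n) (Fin n) ℝ) (lam : ℂ),
      (fromCols (cx A - lam • 1) (cx B)).rank = n ↔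
      ∀ z : Fin n → ℂ, z ᵥ* (cx A - lam • 1) = 0 → z ᵥ* cx B = 0 → z = 0 := by
    intro A lam
    rw [rank_eq_card_iff_vecMul]
    constructor
    · intro h z h1 h2'
      refine h z ?_
      rw [vecMul_fromCols, h1, h2']
      funext j; cases j <;> rfl
    · intro h z hz
      rw [vecMul_fromCols] at hz
      refine h z ?_ ?_
      · funext j; exact congrFun hz (Sum.inl j)
      · funext j; exact congrFun hz (Sum.inr j)
  -- the data matrix as a product
  have hGmat : ∀ lam : ℂ, fromCols (cx R - lam • (cx Q * cx P)) (cx Q * cx B)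
      = cx Q * fromCols ((cx A₀ - lam • 1) * cx P) (cx B) := by
    intro lam
    rw [mul_fromCols]
    rw [hA₀, cx_mul, cx_mul]
    rw [Matrix.sub_mul, Matrix.mul_sub, Matrix.smul_mul, Matrix.one_mul, Matrix.mul_smul,
      Matrix.mul_assoc]
  -- rank condition for the data matrix in left-kernel form
  have hGiff : ∀ lam : ℂ,
      ((fromCols (cx R - lam • (cx Q * cx P)) (cx Q * cx B)).rank = Q.rank ↔
      ∀ η : Fin l → ℂ, η ᵥ* (cx R - lam • (cx Q * cx P)) = 0 → η ᵥ* (cx Q * cx B) = 0 →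
        η ᵥ* cx Q = 0) := by
    intro lam
    rw [← rank_cx Q, hGmat lam]
    rw [rank_eq_rank_iff_vecMul (cx Q) _ (fun η hη => by
      rw [← vecMul_vecMul, hη, Matrix.zero_vecMul])]
    constructor
    · intro h η h1 h2'
      refine h η ?_
      rw [← hGmat lam, vecMul_fromCols, h1, h2']
      funext j; cases j <;> rfl
    · intro h η hη
      rw [← hGmat lam, vecMul_fromCols] at hη
      refine h η ?_ ?_
      · funext j; exact congrFun hη (Sum.inl j)
      · funext j; exact congrFun hη (Sum.inr j)
  -- perturbation helper
  have hpert : ∀ N : Matrix (Fin n) (Fin n) ℝ, Q * N * P = 0 → R = Q * (A₀ + N) * P := by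
    intro N hN
    rw [Matrix.mul_add, Matrix.add_mul, hN, add_zero, ← hA₀]
  constructor
  · -- forward direction
    intro hL
    have hL' : ∀ A : Matrix (Fin n) (Fin n) ℝ, R = Q * A * P → ∀ lam ∈ S,
        ∀ z : Fin n → ℂ, z ᵥ* (cx A - lam • 1) = 0 → z ᵥ* cx B = 0 → z = 0 :=
      fun A hA lam hlam => (hHaut A lam).mp (hL A hA lam hlam)
    constructor
    · -- ker Q ≤ range B
      intro x hx
      rw [LinearMap.mem_ker, mulVecLin_apply] at hx
      by_contra hnot
      obtain ⟨z, hzB, hzx⟩ := exists_sep B x hnot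
      set w : Fin n → ℝ := (2 : ℝ) • z - z ᵥ* A₀ with hw
      set cc : ℝ := (z ⬝ᵥ x)⁻¹ with hcc
      set A : Matrix (Fin n) (Fin n) ℝ := A₀ + cc • vecMulVec x w with hA
      have hRA : R = Q * A * P := by
        refine hpert _ ?_
        rw [Matrix.mul_smul, mul_vecMulVec, hx, vecMulVec_zero_left, smul_zero, Matrix.zero_mul]
      have hzA : z ᵥ* A = (2 : ℝ) • z := by
        rw [hA, vecMul_add, vecMul_smul_mat, vecMul_vecMulVec, smul_smul,
          inv_mul_cancel₀ hzx, one_smul, hw]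
        abel
      have hzero := hL' A hRA 2 h2 (cxv z)
        (by
          rw [vecMul_sub, vecMul_smul_mat, vecMul_one, ← cxv_vecMul, hzA, cxv_smul]
          norm_num)
        (by rw [← cxv_vecMul, hzB, cxv_zero])
      rw [cxv_eq_zero] at hzero
      rw [hzero, zero_dotProduct] at hzx
      exact hzx rfl
    · -- rank condition
      intro lam hlam
      rw [hGiff lam]
      intro η h1 h2'
      set z : Fin n → ℂ := η ᵥ* cx Q with hzdef
      show z = 0
      by_contra hz0
      have hzB : z ᵥ* cx B = 0 := by rw [hzdef, vecMul_vecMul]; exact h2'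
      set v : Fin n → ℂ := lam • z - z ᵥ* cx A₀ with hvdef
      have hvP : v ᵥ* cx P = 0 := by
        rw [hvdef, Matrix.sub_vecMul, smul_vecMul]
        have e1 : z ᵥ* cx P = η ᵥ* (cx Q * cx P) := by rw [hzdef, vecMul_vecMul]
        have e2 : (z ᵥ* cx A₀) ᵥ* cx P = η ᵥ* cx R := by
          rw [hzdef, vecMul_vecMul, vecMul_vecMul, ← Matrix.mul_assoc, ← cx_mul, ← cx_mul, ← hA₀]
        rw [e1, e2]
        rw [vecMul_sub, sub_eq_zero, vecMul_smul_mat] at h1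
        rw [h1, sub_self]
      by_cases hcase : ∃ (γ : ℂ) (z₀ : Fin n → ℝ), z₀ ≠ 0 ∧ z = γ • cxv z₀
      · -- z is a complex multiple of a real vector
        obtain ⟨γ, z₀, hz₀, hzeq⟩ := hcase
        have hγ : γ ≠ 0 := by
          rintro rfl
          rw [zero_smul] at hzeq
          exact hz0 hzeq
        have hz₀B : z₀ ᵥ* B = 0 := by
          have h' : γ • (cxv z₀ ᵥ* cx B) = 0 := by rw [← smul_vecMul, ← hzeq]; exact hzB
          rw [smul_eq_zero] at h'
          rcases h' with h' | h'
          · exact absurd h' hγ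
          · rw [← cxv_vecMul] at h'
            exact cxv_eq_zero.mp h'
        have hP1 : lam • cxv (z₀ ᵥ* P) - cxv ((z₀ ᵥ* A₀) ᵥ* P) = 0 := by
          have hveq : v = γ • (lam • cxv z₀ - cxv (z₀ ᵥ* A₀)) := by
            rw [hvdef, hzeq, cxv_vecMul, smul_sub, smul_comm γ lam, smul_vecMul]
          have h' := hvP
          rw [hveq, smul_vecMul, smul_eq_zero] at h'
          rcases h' with h' | h'
          · exact absurd h' hγ
          · rw [Matrix.sub_vecMul, smul_vecMul, ← cxv_vecMul, ← cxv_vecMul] at h'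
            exact h'
        obtain ⟨t, htS, hq⟩ : ∃ t : ℝ, ((t : ℂ) ∈ S) ∧ (z₀ ᵥ* A₀) ᵥ* P = t • (z₀ ᵥ* P) := by
          by_cases him : lam.im = 0
          · refine ⟨lam.re, ?_, ?_⟩
            · have : (lam.re : ℂ) = lam := by
                apply Complex.ext <;> simp [him]
              rw [this]; exact hlam
            · funext j
              have hj := congrFun hP1 j
              simp only [Pi.sub_apply, Pi.smul_apply, cxv, smul_eq_mul, Pi.zero_apply,
                sub_eq_zero] at hj
              have := congrArg Complex.re hj.symm
              simpa [Complex.mul_re, him] using this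
          · refine ⟨2, by norm_num; exact_mod_cast h2, ?_⟩
            have hp₀ : z₀ ᵥ* P = 0 := by
              funext j
              have hj := congrFun hP1 j
              simp only [Pi.sub_apply, Pi.smul_apply, cxv, smul_eq_mul, Pi.zero_apply,
                sub_eq_zero] at hj
              have := congrArg Complex.im hj.symm
              simp only [Complex.mul_im, Complex.ofReal_re, Complex.ofReal_im,
                mul_zero, add_zero, Complex.ofReal_im] at this
              -- this : lam.im * (z₀ ᵥ* P) j = 0  (in some arrangement)
              field_simp [him] at this
              simp only [zero_add] at this
              exact (mul_eq_zero.mp this.symm).resolve_left him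
            have hq₀ : (z₀ ᵥ* A₀) ᵥ* P = 0 := by
              have := hP1
              rw [hp₀, cxv_zero, smul_zero, zero_sub, neg_eq_zero] at this
              exact cxv_eq_zero.mp this
            rw [hp₀, hq₀, smul_zero]
        set v₀ : Fin n → ℝ := t • z₀ - z₀ ᵥ* A₀ with hv₀
        have hv₀P : v₀ ᵥ* P = 0 := by
          rw [hv₀, Matrix.sub_vecMul, smul_vecMul, hq, sub_self]
        have hdot0 : z₀ ⬝ᵥ z₀ ≠ 0 := fun h => hz₀ (dotProduct_self_eq_zero.mp h)
        set cc : ℝ := (z₀ ⬝ᵥ z₀)⁻¹ with hcc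
        set A : Matrix (Fin n) (Fin n) ℝ := A₀ + cc • vecMulVec z₀ v₀ with hA
        have hRA : R = Q * A * P := by
          refine hpert _ ?_
          rw [Matrix.mul_smul, Matrix.smul_mul, Matrix.mul_assoc, vecMulVec_mul, hv₀P,
            vecMulVec_zero_right, Matrix.mul_zero, smul_zero]
        have hzA : z₀ ᵥ* A = t • z₀ := by
          rw [hA, vecMul_add, vecMul_smul_mat, vecMul_vecMulVec, smul_smul,
            inv_mul_cancel₀ hdot0, one_smul, hv₀]
          abel
        have hzero := hL' A hRA t htS (cxv z₀)
          (by
            rw [vecMul_sub, vecMul_smul_mat, vecMul_one, ← cxv_vecMul, hzA, cxv_smul, sub_self])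
          (by rw [← cxv_vecMul, hz₀B, cxv_zero])
        exact hz₀ (cxv_eq_zero.mp hzero)
      · -- real and imaginary parts independent
        set z₁ : Fin n → ℝ := reV z with hz₁
        set z₂ : Fin n → ℝ := imV z with hz₂
        set Z : Matrix (Fin 2) (Fin n) ℝ := Matrix.of ![z₁, z₂] with hZ
        have hsurj : ∀ e : Fin 2 → ℝ, e ∈ LinearMap.range Z.mulVecLin := by
          intro e
          by_contra he
          obtain ⟨cc, hcZ, hce⟩ := exists_sep Z e he
          have hab : cc 0 • z₁ + cc 1 • z₂ = 0 := by
            funext j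
            have := congrFun hcZ j
            simpa [hZ, Matrix.vecMul, dotProduct, Fin.sum_univ_two] using this
          set δ : ℂ := (cc 0 : ℂ) - (cc 1 : ℂ) * Complex.I with hδdef
          have hccne : cc 0 ≠ 0 ∨ cc 1 ≠ 0 := by
            by_contra hcon
            push_neg at hcon
            have : cc = 0 := by
              funext i
              fin_cases i
              · exact hcon.1
              · exact hcon.2
            rw [this, zero_dotProduct] at hce
            exact hce rfl
          have hδ : δ ≠ 0 := by
            rw [hδdef]
            intro hcontra
            rw [Complex.ext_iff] at hcontra
            simp at hcontra
            rcases hccne with h' | h' <;> tauto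
          have hiden : δ • z = Complex.I • cxv (cc 0 • z₂ - cc 1 • z₁) := by
            funext j
            have habj : cc 0 * z₁ j + cc 1 * z₂ j = 0 := by
              have := congrFun hab j
              simpa using this
            have hzj : z j = Complex.mk (z₁ j) (z₂ j) := by
              rw [hz₁, hz₂]
              simp [reV, imV, Complex.ext_iff]
            simp only [Pi.smul_apply, smul_eq_mul, hzj, hδdef, cxv, Pi.sub_apply,
              Pi.smul_apply, smul_eq_mul]
            rw [Complex.ext_iff]
            constructor
            · simp [Complex.mul_re, Complex.mul_im]
              nlinarith [habj]
            · simp [Complex.mul_re, Complex.mul_im]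
              nlinarith [habj]
          have hw₀ : cc 0 • z₂ - cc 1 • z₁ ≠ 0 := by
            intro hcontra
            rw [hcontra, cxv_zero, smul_zero] at hiden
            rw [smul_eq_zero] at hiden
            rcases hiden with h' | h'
            · exact hδ h'
            · exact hz0 h'
          exact hcase ⟨δ⁻¹ * Complex.I, cc 0 • z₂ - cc 1 • z₁, hw₀, by
            rw [mul_smul]
            rw [← hiden, smul_smul, inv_mul_cancel₀ hδ, one_smul]⟩
        obtain ⟨w₁, hw₁⟩ := hsurj ![1, 0]
        obtain ⟨w₂, hw₂⟩ := hsurj ![0, 1]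
        rw [mulVecLin_apply] at hw₁ hw₂
        have h11 : z₁ ⬝ᵥ w₁ = 1 := by
          have := congrFun hw₁ 0
          simpa [hZ, Matrix.mulVec, dotProduct] using this
        have h21 : z₂ ⬝ᵥ w₁ = 0 := by
          have := congrFun hw₁ 1
          simpa [hZ, Matrix.mulVec, dotProduct] using this
        have h12 : z₁ ⬝ᵥ w₂ = 0 := by
          have := congrFun hw₂ 0
          simpa [hZ, Matrix.mulVec, dotProduct] using this
        have h22 : z₂ ⬝ᵥ w₂ = 1 := by
          have := congrFun hw₂ 1
          simpa [hZ, Matrix.mulVec, dotProduct] using this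
        set v₁ : Fin n → ℝ := reV v with hv₁
        set v₂ : Fin n → ℝ := imV v with hv₂
        have hv₁P : v₁ ᵥ* P = 0 := by
          rw [hv₁, ← reV_vecMul, hvP]
          funext j; simp [reV]
        have hv₂P : v₂ ᵥ* P = 0 := by
          rw [hv₂, ← imV_vecMul, hvP]
          funext j; simp [imV]
        set N : Matrix (Fin n) (Fin n) ℝ := vecMulVec w₁ v₁ + vecMulVec w₂ v₂ with hN
        set A : Matrix (Fin n) (Fin n) ℝ := A₀ + N with hA
        have hRA : R = Q * A * P := by
          refine hpert _ ?_
          rw [hN, Matrix.mul_add, Matrix.add_mul, Matrix.mul_assoc, Matrix.mul_assoc,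
            vecMulVec_mul, vecMulVec_mul, hv₁P, hv₂P, vecMulVec_zero_right,
            vecMulVec_zero_right, Matrix.mul_zero, add_zero]
        have hzdot : ∀ w : Fin n → ℝ,
            z ⬝ᵥ cxv w = ((z₁ ⬝ᵥ w : ℝ) : ℂ) + Complex.I * ((z₂ ⬝ᵥ w : ℝ) : ℂ) := by
          intro w
          conv_lhs => rw [re_add_I_im z]
          rw [add_dotProduct, smul_dotProduct, cxv_dot, cxv_dot]
          rw [← hz₁, ← hz₂]
          simp [smul_eq_mul]
        have hzN : z ᵥ* cx N = v := by
          rw [hN, cx_add, cx_vecMulVec, cx_vecMulVec, vecMul_add, vecMul_vecMulVec,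
            vecMul_vecMulVec, hzdot w₁, hzdot w₂, h11, h21, h12, h22]
          push_cast
          rw [mul_zero, add_zero, mul_one, zero_add]
          conv_rhs => rw [re_add_I_im v]
          rw [← hv₁, ← hv₂]
          simp [smul_eq_mul]
        have hzero := hL' A hRA lam hlam z
          (by
            rw [hA, cx_add, vecMul_sub, vecMul_add, hzN, vecMul_smul_mat, vecMul_one, hvdef]
            abel)
          hzB
        exact hz0 hzero
  · -- backward direction
    rintro ⟨hK, hG⟩ A hRA lam hlam
    rw [hHaut A lam]
    intro z hz1 hz2
    have hzann : ∀ x : Fin n → ℂ, cx Q *ᵥ x = 0 → z ⬝ᵥ x = 0 := by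
      intro x hQx
      have hre : Q *ᵥ reV x = 0 := by
        rw [← reV_mulVec, hQx]; funext i; simp [reV]
      have him' : Q *ᵥ imV x = 0 := by
        rw [← imV_mulVec, hQx]; funext i; simp [imV]
      obtain ⟨u₁, hu₁⟩ := hK (by rw [LinearMap.mem_ker, mulVecLin_apply]; exact hre)
      obtain ⟨u₂, hu₂⟩ := hK (by rw [LinearMap.mem_ker, mulVecLin_apply]; exact him')
      rw [mulVecLin_apply] at hu₁ hu₂
      have hxeq : x = cx B *ᵥ (cxv u₁ + Complex.I • cxv u₂) := by
        rw [mulVec_add, mulVec_smul, ← cxv_mulVec, ← cxv_mulVec, hu₁, hu₂, ← re_add_I_im]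
      rw [hxeq, dotProduct_mulVec, hz2, zero_dotProduct]
    obtain ⟨η, hη⟩ := exists_vecMul_of_dot_ker (cx Q) z hzann
    have hzA : z ᵥ* cx A = lam • z := by
      rw [vecMul_sub, vecMul_smul_mat, vecMul_one, sub_eq_zero] at hz1
      exact hz1
    have e1 : η ᵥ* (cx R - lam • (cx Q * cx P)) = 0 := by
      rw [vecMul_sub, vecMul_smul_mat, hRA, cx_mul, cx_mul]
      have e : η ᵥ* (cx Q * cx A * cx P) = lam • (η ᵥ* (cx Q * cx P)) := by
        rw [Matrix.mul_assoc, ← vecMul_vecMul, ← hη, ← vecMul_vecMul, hzA, smul_vecMul, hη,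
          vecMul_vecMul]
      rw [e, sub_self]
    have e2 : η ᵥ* (cx Q * cx B) = 0 := by
      rw [← vecMul_vecMul, ← hη, hz2]
    have hQη := (hGiff lam).mp (hG lam hlam) η e1 e2
    rw [← hη] at hQη
    exact hQη


end HautusAux

/-- uniform Hautus test for controllability / stabilizability of (A,B)
over the affine set 𝒜 = { A : R = Q A P }. -/
theorem uniform_hautus_controllability_stabilizability (n r l m : ℕ)
    (P : Matrix (Fin n) (Fin r) ℝ) (Q : Matrix (Fin l) (Fin n) ℝ)
    (R : Matrix (Fin l) (Fin r) ℝ) (B : Matrix (Fin n) (Fin m) ℝ)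
    (him : LinearMap.range R.mulVecLin ≤ LinearMap.range Q.mulVecLin)
    (hker : LinearMap.ker P.mulVecLin ≤ LinearMap.ker R.mulVecLin) :
    ((∀ A : Matrix (Fin n) (Fin n) ℝ, R = Q * A * P → ∀ lam : ℂ,
        (fromCols (cx A - lam • 1) (cx B)).rank = n) ↔
      (LinearMap.ker Q.mulVecLin ≤ LinearMap.range B.mulVecLin ∧
        ∀ lam : ℂ,
          (fromCols (cx R - lam • (cx Q * cx P)) (cx Q * cx B)).rank = Q.rank))
    ∧
    ((∀ A : Matrix (Fin n) (Fin n) ℝ, R = Q * A * P → ∀ lam : ℂ, 1 ≤ ‖lam‖ →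
        (fromCols (cx A - lam • 1) (cx B)).rank = n) ↔
      (LinearMap.ker Q.mulVecLin ≤ LinearMap.range B.mulVecLin ∧
        ∀ lam : ℂ, 1 ≤ ‖lam‖ →
          (fromCols (cx R - lam • (cx Q * cx P)) (cx Q * cx B)).rank = Q.rank)) := by
  obtain ⟨A₀, hA₀⟩ := HautusAux.exists_A0 P Q R him hker
  constructor
  · constructor
    · intro h
      have hm := (HautusAux.main P Q R B A₀ hA₀ Set.univ (Set.mem_univ _)).mp
        (fun A hA lam _ => h A hA lam)
      exact ⟨hm.1, fun lam => hm.2 lam (Set.mem_univ _)⟩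
    · intro h A hA lam
      exact (HautusAux.main P Q R B A₀ hA₀ Set.univ (Set.mem_univ _)).mpr
        ⟨h.1, fun lam _ => h.2 lam⟩ A hA lam (Set.mem_univ _)
  · have h2S : (2 : ℂ) ∈ {z : ℂ | 1 ≤ ‖z‖} := by
      simp only [Set.mem_setOf_eq]
      rw [Complex.norm_two]
      norm_num
    constructor
    · intro h
      have hm := (HautusAux.main P Q R B A₀ hA₀ {z : ℂ | 1 ≤ ‖z‖} h2S).mp
        (fun A hA lam hlam => h A hA lam hlam)
      exact ⟨hm.1, fun lam hlam => hm.2 lam hlam⟩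
    · intro h A hA lam hlam
      exact (HautusAux.main P Q R B A₀ hA₀ {z : ℂ | 1 ≤ ‖z‖} h2S).mpr
        ⟨h.1, fun lam hlam => h.2 lam hlam⟩ A hA lam hlam
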